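/- Let μ > 0, σ > 0 with μ ≠ σ²/2, γ > 0 with 0 < μ/(γσ²) < 1, write π* = μ/(γσ²), and let ε₀ > 0 and λ : (0, ε₀) → (0, μ) satisfy μ + λ(ε) < γσ² for all ε and λ(ε) = γσ²·( (3/(4γ))·π*²·(1−π*)² )^{1/3}·ε^{1/3} + O(ε) as ε ↓ 0. Define π₋(ε) = (μ−λ(ε))/(γσ²), π₊(ε) = (μ+λ(ε))/(γσ²), R(ε) = (1/(1−ε))·( (μ+λ(ε))·(γσ² − μ + λ(ε)) ) / ( (μ−λ(ε))·(γσ² − μ − λ(ε)) ), and the average share turnover ShTu(ε) = (σ²/2)·(2μ/σ² − 1)·( (1−π₋(ε))/(R(ε)^{2μ/σ² − 1} − 1) − (1−π₊(ε))/(R(ε)^{1 − 2μ/σ²} − 1) ). Then ShTu(ε) = (σ²/2)·(1−π*)²·π*·( (3/(4γ))·π*²·(1−π*)² )^{−1/3}·ε^{−1/3} + O(ε^{1/3}) as ε ↓ 0. -/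

import Mathlib

open Asymptotics Filter
set_option maxHeartbeats 1600000

private lemma log_taylor2 (u : ℝ) (h : |u| ≤ 1/2) :
    |Real.log (1+u) - u + u^2/2| ≤ 2*|u|^3 := by
  have h1 : |(-u)| < 1 := by rw [abs_neg]; linarith
  have h2 := Real.abs_log_sub_add_sum_range_le h1 2
  simp only [Finset.sum_range_succ, Finset.sum_range_zero] at h2
  norm_num at h2
  have h3 : |u|^3 / (1 - |u|) ≤ 2*|u|^3 := by
    rw [div_le_iff₀ (by linarith : (0:ℝ) < 1 - |u|)]
    nlinarith [abs_nonneg u, pow_nonneg (abs_nonneg u) 3]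
  calc |Real.log (1+u) - u + u^2/2|
      = |-u + u^2/2 + Real.log (1+u)| := by ring_nf
    _ ≤ |u|^3 / (1-|u|) := h2
    _ ≤ 2*|u|^3 := h3

private lemma exp_taylor2 (x : ℝ) (h : |x| ≤ 1) :
    |Real.exp x - (1 + x + x^2/2)| ≤ |x|^3 := by
  have h2 := Real.exp_bound h (by norm_num : 0 < 3)
  simp only [Finset.sum_range_succ, Finset.sum_range_zero] at h2
  norm_num [Nat.factorial] at h2
  nlinarith [pow_nonneg (abs_nonneg x) 3]

private lemma log_ratio (t d : ℝ) (ht : 0 < t) (hd : 0 < d) (hdt : d ≤ t/2) :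
    |Real.log (t+d) - Real.log (t-d) - 2*(d/t)| ≤ 4*(d/t)^3 := by
  have hu0 : 0 < d/t := div_pos hd ht
  have hu2 : d/t ≤ 1/2 := by rw [div_le_iff₀ ht]; linarith
  have hu : |d/t| ≤ 1/2 := by rwa [abs_of_pos hu0]
  have h1 := log_taylor2 (d/t) hu
  have h2 := log_taylor2 (-(d/t)) (by rwa [abs_neg])
  have hne : (0:ℝ) < 1 + -(d/t) := by linarith
  have e1 : Real.log (t+d) = Real.log t + Real.log (1 + d/t) := by
    rw [← Real.log_mul ht.ne' (by positivity)]
    congr 1; field_simp; try ring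
  have e2 : Real.log (t-d) = Real.log t + Real.log (1 + -(d/t)) := by
    rw [← Real.log_mul ht.ne' hne.ne']
    congr 1; field_simp; try ring
  rw [abs_neg, abs_of_pos hu0] at h2
  rw [abs_of_pos hu0] at h1
  rw [e1, e2]
  have key : Real.log t + Real.log (1 + d/t) - (Real.log t + Real.log (1 + -(d/t))) - 2*(d/t)
      = (Real.log (1 + d/t) - d/t + (d/t)^2/2) - (Real.log (1 + -(d/t)) - (-(d/t)) + (-(d/t))^2/2) := by
    ring
  rw [key]
  calc _ ≤ |Real.log (1 + d/t) - d/t + (d/t)^2/2| + |Real.log (1 + -(d/t)) - (-(d/t)) + (-(d/t))^2/2| :=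
        abs_sub _ _
    _ ≤ 2*(d/t)^3 + 2*(d/t)^3 := add_le_add h1 h2
    _ = 4*(d/t)^3 := by ring

private lemma log_one_sub_small (ε : ℝ) (h0 : 0 ≤ ε) (h1 : ε ≤ 1/2) :
    |Real.log (1 - ε)| ≤ 2*ε := by
  have h2 := log_taylor2 (-ε) (by rw [abs_neg, abs_of_nonneg h0]; exact h1)
  rw [abs_neg, abs_of_nonneg h0] at h2
  have h3 : (1:ℝ) + -ε = 1 - ε := by ring
  rw [h3] at h2
  have h4 := abs_le.mp h2
  rw [abs_le]
  constructor <;> nlinarith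

theorem share_turnover_asymptotics
    (μ σ γ : ℝ) (hμ : 0 < μ) (hσ : 0 < σ) (hdrift : μ ≠ σ ^ 2 / 2) (hγ : 0 < γ)
    (hmerton : 0 < μ / (γ * σ ^ 2)) (hmerton1 : μ / (γ * σ ^ 2) < 1)
    (πs : ℝ) (hπs : πs = μ / (γ * σ ^ 2))
    (ε₀ : ℝ) (hε₀ : 0 < ε₀) (lam : ℝ → ℝ)
    (hmem : ∀ ε ∈ Set.Ioo (0 : ℝ) ε₀, lam ε ∈ Set.Ioo 0 μ)
    (hlev : ∀ ε ∈ Set.Ioo (0 : ℝ) ε₀, μ + lam ε < γ * σ ^ 2)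
    (hlam : (fun ε : ℝ => lam ε
        - γ * σ ^ 2 * ((3 / (4 * γ)) * πs ^ 2 * (1 - πs) ^ 2) ^ ((1 : ℝ) / 3)
          * ε ^ ((1 : ℝ) / 3))
      =O[nhdsWithin 0 (Set.Ioi 0)] fun ε : ℝ => ε)
    (πm πp R ShTu : ℝ → ℝ)
    (hπm : πm = fun ε : ℝ => (μ - lam ε) / (γ * σ ^ 2))
    (hπp : πp = fun ε : ℝ => (μ + lam ε) / (γ * σ ^ 2))
    (hR : R = fun ε : ℝ => (1 / (1 - ε))
      * ((μ + lam ε) * (γ * σ ^ 2 - μ + lam ε))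
      / ((μ - lam ε) * (γ * σ ^ 2 - μ - lam ε)))
    (hShTu : ShTu = fun ε : ℝ => (σ ^ 2 / 2) * (2 * μ / σ ^ 2 - 1)
      * ((1 - πm ε) / (R ε ^ (2 * μ / σ ^ 2 - 1) - 1)
        - (1 - πp ε) / (R ε ^ (1 - 2 * μ / σ ^ 2) - 1))) :
    (fun ε : ℝ => ShTu ε
        - (σ ^ 2 / 2) * (1 - πs) ^ 2 * πs
          * ((3 / (4 * γ)) * πs ^ 2 * (1 - πs) ^ 2) ^ (-(1 : ℝ) / 3)
          * ε ^ (-(1 : ℝ) / 3))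
      =O[nhdsWithin 0 (Set.Ioi 0)] fun ε : ℝ => ε ^ ((1 : ℝ) / 3) := by
  have hσ2 : (0:ℝ) < σ^2 := by positivity
  have hk : (0:ℝ) < γ*σ^2 := by positivity
  have hπs0 : 0 < πs := hπs ▸ hmerton
  have hπs1 : πs < 1 := hπs ▸ hmerton1
  have hμk : μ = πs * (γ*σ^2) := by rw [hπs]; field_simp
  set k := γ*σ^2 with hkdef
  set β := 2*μ/σ^2 - 1 with hβdef
  have hβ : β ≠ 0 := by
    rw [hβdef]
    intro h
    apply hdrift
    have : 2*μ/σ^2 = 1 := by linarith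
    field_simp at this
    linarith
  set B := |β| with hBdef
  have hB : 0 < B := abs_pos.mpr hβ
  set Q := (3/(4*γ))*πs^2*(1-πs)^2 with hQdef
  have hQ : 0 < Q := by
    apply mul_pos (mul_pos (by positivity) (pow_pos hπs0 2)) (pow_pos (by linarith) 2)
  set c := Q ^ ((1:ℝ)/3) with hcdef
  have hc : 0 < c := Real.rpow_pos_of_pos hQ _
  set t2 := 1 - πs with ht2def
  have ht2 : 0 < t2 := by rw [ht2def]; linarith
  set a := 2/(πs*t2) with hadef
  have ha : 0 < a := by positivity
  set A := σ^2*t2*β with hAdef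
  clear_value β B Q c t2 a A
  set l := nhdsWithin (0:ℝ) (Set.Ioi 0) with hldef
  -- constants
  set KL := 4/πs^3 + 4/t2^3 + 16/c^3 with hKLdef
  have hKL : 0 < KL := by positivity
  set K3 := B^3*(a+KL)^3 + B*KL + (B^2/2)*(KL*(2*a+KL)) with hK3def
  have hK3 : 0 < K3 := by positivity
  set K4 := K3 + (B*a)^2/2 with hK4def
  have hK4 : 0 < K4 := by positivity
  set K5 := K3 + (B*a/2)*K4 with hK5def
  have hK5 : 0 < K5 := by positivity
  clear_value KL K3 K4 K5
  -- bound from hlam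
  obtain ⟨K0, hK0⟩ := hlam.bound
  set K2 := (|K0| + 1)/k with hK2def
  have hK2 : 0 < K2 := by positivity
  have hKev : ∀ᶠ ε in l, |lam ε - k*c*ε^((1:ℝ)/3)| ≤ (|K0|+1) * |ε| := by
    filter_upwards [hK0] with ε h
    simp only [Real.norm_eq_abs] at h
    have := le_abs_self K0
    nlinarith [abs_nonneg ε, abs_nonneg (lam ε - k*c*ε^((1:ℝ)/3))]
  clear_value K2
  -- d₀ smallness threshold
  set d₀ := min (min (πs/2) (t2/2)) (min (min 1 (1/(B*(a+KL)))) (B*a/(2*K4))) with hd₀def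
  have hd₀ : 0 < d₀ := by
    apply lt_min (lt_min (by linarith) (by linarith))
    apply lt_min (lt_min one_pos (by positivity)) (by positivity)
  clear_value d₀
  -- eventual facts
  have hpos : ∀ᶠ ε in l, (0:ℝ) < ε := eventually_mem_nhdsWithin
  have hev_lt : ∀ t : ℝ, 0 < t → ∀ᶠ ε in l, ε < t := fun t ht =>
    (eventually_lt_nhds ht).filter_mono nhdsWithin_le_nhds
  have h13 : Filter.Tendsto (fun ε : ℝ => ε ^ ((1:ℝ)/3)) l (nhds 0) := by
    have h := (Real.continuousAt_rpow_const 0 (1/3) (Or.inr (by norm_num))).tendsto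
    rw [Real.zero_rpow (by norm_num : (1:ℝ)/3 ≠ 0)] at h
    exact h.mono_left nhdsWithin_le_nhds
  have h23 : Filter.Tendsto (fun ε : ℝ => ε ^ ((2:ℝ)/3)) l (nhds 0) := by
    have h := (Real.continuousAt_rpow_const 0 (2/3) (Or.inr (by norm_num))).tendsto
    rw [Real.zero_rpow (by norm_num : (2:ℝ)/3 ≠ 0)] at h
    exact h.mono_left nhdsWithin_le_nhds
  have hev1 : ∀ᶠ ε in l, K2 * ε^((2:ℝ)/3) ≤ c/2 := by
    filter_upwards [h23.eventually_lt_const (show (0:ℝ) < c/(2*K2) by positivity)] with ε h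
    rw [lt_div_iff₀ (by positivity : (0:ℝ) < 2*K2)] at h
    nlinarith
  have hev2 : ∀ᶠ ε in l, (3*c/2) * ε^((1:ℝ)/3) ≤ d₀ := by
    filter_upwards [h13.eventually_lt_const (show (0:ℝ) < d₀/(3*c/2) by positivity)] with ε h
    rw [lt_div_iff₀ (by positivity : (0:ℝ) < 3*c/2)] at h
    nlinarith [Real.rpow_nonneg (le_of_lt (show (0:ℝ) < 1 by norm_num)) ((1:ℝ)/3)]
  -- main estimate
  rw [Asymptotics.isBigO_iff]
  refine ⟨|A| * (2*K5/((B*a)^2)) * (3*c/2) + |A/(β*a)| * (2*K2/c^2) + σ^2/2*B*(3*c/2), ?_⟩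
  filter_upwards [hpos, hev_lt ε₀ hε₀, hev_lt (1/2) (by norm_num), hKev, hev1, hev2]
    with ε hεpos hεε₀ hεhalf hKb hsm1 hsm2
  rw [Real.norm_eq_abs, Real.norm_eq_abs]
  set e3 := ε ^ ((1:ℝ)/3) with he3def
  have he3 : 0 < e3 := Real.rpow_pos_of_pos hεpos _
  have he3cube : e3^3 = ε := by
    rw [he3def, ← Real.rpow_natCast (ε ^ ((1:ℝ)/3)) 3, ← Real.rpow_mul hεpos.le]
    norm_num
  clear_value e3
  have hεIoo : ε ∈ Set.Ioo (0:ℝ) ε₀ := ⟨hεpos, hεε₀⟩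
  obtain ⟨hlam0, hlamμ⟩ := hmem ε hεIoo
  have hlev' := hlev ε hεIoo
  set d := lam ε / k with hddef
  have hd0 : 0 < d := div_pos hlam0 hk
  have hlamd : lam ε = d * k := by rw [hddef]; field_simp
  clear_value d
  have hdb : |d - c*e3| ≤ K2*ε := by
    have hdrw : d - c*e3 = (lam ε - k*c*e3)/k := by rw [hddef]; field_simp
    rw [hdrw, abs_div, abs_of_pos hk, div_le_iff₀ hk]
    calc |lam ε - k*c*e3| ≤ (|K0|+1)*|ε| := hKb
      _ = K2*ε*k := by rw [abs_of_pos hεpos, hK2def]; field_simp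
  have hsplit : ε = ε^((2:ℝ)/3) * e3 := by
    rw [he3def, ← Real.rpow_add hεpos]
    norm_num
  have hKε : K2*ε ≤ c/2*e3 := by
    have : K2*ε = K2*ε^((2:ℝ)/3)*e3 := by conv_lhs => rw [hsplit]; rw [← mul_assoc]
    rw [this]
    exact mul_le_mul_of_nonneg_right hsm1 he3.le
  have hdlo : c/2*e3 ≤ d := by
    have h := (abs_le.mp hdb).1
    linarith
  have hdhi : d ≤ 3*c/2*e3 := by
    have h := (abs_le.mp hdb).2
    linarith
  have hdd₀ : d ≤ d₀ := le_trans hdhi hsm2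
  have hdπ : d ≤ πs/2 := hdd₀.trans (hd₀def ▸ (min_le_left _ _).trans (min_le_left _ _))
  have hdt2 : d ≤ t2/2 := hdd₀.trans (hd₀def ▸ (min_le_left _ _).trans (min_le_right _ _))
  have hd1 : d ≤ 1 := hdd₀.trans (hd₀def ▸ (min_le_right _ _).trans ((min_le_left _ _).trans (min_le_left _ _)))
  have hdBL : d ≤ 1/(B*(a+KL)) := hdd₀.trans (hd₀def ▸ (min_le_right _ _).trans ((min_le_left _ _).trans (min_le_right _ _)))
  have hdK4 : d ≤ B*a/(2*K4) := hdd₀.trans (hd₀def ▸ (min_le_right _ _).trans (min_le_right _ _))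
  have hεd : ε ≤ 8/c^3 * d^3 := by
    have he3d : e3 ≤ 2/c*d := by
      rw [div_mul_eq_mul_div, le_div_iff₀ hc]
      linarith
    calc ε = e3^3 := he3cube.symm
      _ ≤ (2/c*d)^3 := pow_le_pow_left₀ he3.le he3d 3
      _ = 8/c^3*d^3 := by field_simp; ring
  -- positivity facts
  have hπsd : (0:ℝ) < πs - d := by linarith
  have h2d : (0:ℝ) < (1-πs) - d := by
    have := ht2def
    linarith
  have h1ε : (0:ℝ) < 1 - ε := by linarith
  have hπsd' : (0:ℝ) < πs + d := by linarith
  have h2d' : (0:ℝ) < (1-πs) + d := by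
    have := ht2def
    linarith
  have h1πsne : (1:ℝ) - πs ≠ 0 := by linarith
  -- value of R
  have hne3' : μ + lam ε = (πs + d)*k := by rw [hμk, hlamd]; ring
  have hne4' : k - μ + lam ε = ((1-πs) + d)*k := by rw [hμk, hlamd]; ring
  have hne1' : μ - lam ε = (πs - d)*k := by rw [hμk, hlamd]; ring
  have hne2' : k - μ - lam ε = ((1-πs) - d)*k := by rw [hμk, hlamd]; ring
  have hRval : R ε = ((πs+d)*((1-πs)+d))/((1-ε)*((πs-d)*((1-πs)-d))) := by
    simp only [hR]
    rw [hne3', hne4', hne1', hne2']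
    field_simp
  have hRpos : 0 < R ε := by
    rw [hRval]
    exact div_pos (mul_pos hπsd' h2d') (mul_pos h1ε (mul_pos hπsd h2d))
  have hR1 : 1 < R ε := by
    rw [hRval, lt_div_iff₀ (mul_pos h1ε (mul_pos hπsd h2d))]
    have hstep1 : (1-ε)*((πs-d)*((1-πs)-d)) ≤ (πs-d)*((1-πs)-d) :=
      mul_le_of_le_one_left (mul_pos hπsd h2d).le (by linarith)
    have hstep2 : (πs+d)*((1-πs)+d) - (πs-d)*((1-πs)-d) = 2*d := by ring
    linarith
  set L := Real.log (R ε) with hLdef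
  clear_value L
  have hL0 : 0 < L := by rw [hLdef]; exact Real.log_pos hR1
  have hLsum : L = (Real.log (πs+d) - Real.log (πs-d))
      + (Real.log ((1-πs)+d) - Real.log ((1-πs)-d)) - Real.log (1-ε) := by
    rw [hLdef, hRval, Real.log_div (mul_pos hπsd' h2d').ne' (mul_pos h1ε (mul_pos hπsd h2d)).ne',
      Real.log_mul hπsd'.ne' h2d'.ne', Real.log_mul h1ε.ne' (mul_pos hπsd h2d).ne',
      Real.log_mul hπsd.ne' h2d.ne']
    ring
  have hLa : |L - a*d| ≤ KL*d^3 := by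
    have b1 := log_ratio πs d hπs0 hd0 hdπ
    have b2 := log_ratio (1-πs) d (by linarith) hd0 (by have := ht2def; linarith)
    have b3 := log_one_sub_small ε hεpos.le hεhalf.le
    have hsum : 2*(d/πs) + 2*(d/(1-πs)) = a*d := by
      rw [hadef, ht2def]
      field_simp [hπs0.ne', h1πsne]
      try ring
    have hid : L - a*d = (Real.log (πs+d) - Real.log (πs-d) - 2*(d/πs))
        + (Real.log ((1-πs)+d) - Real.log ((1-πs)-d) - 2*(d/(1-πs)))
        + (-Real.log (1-ε)) := by
      rw [hLsum, ← hsum]; ring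
    have q1 : 4*(d/πs)^3 = 4/πs^3*d^3 := by field_simp [hπs0.ne']; try ring
    have q2 : 4*(d/(1-πs))^3 = 4/t2^3*d^3 := by rw [ht2def]; field_simp [h1πsne]; try ring
    have q3 : 2*ε ≤ 16/c^3*d^3 := by
      have h16 : 16/c^3*d^3 = 2*(8/c^3*d^3) := by ring
      linarith
    calc |L - a*d| = |(Real.log (πs+d) - Real.log (πs-d) - 2*(d/πs))
        + (Real.log ((1-πs)+d) - Real.log ((1-πs)-d) - 2*(d/(1-πs)))
        + (-Real.log (1-ε))| := by rw [hid]
      _ ≤ |(Real.log (πs+d) - Real.log (πs-d) - 2*(d/πs))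
        + (Real.log ((1-πs)+d) - Real.log ((1-πs)-d) - 2*(d/(1-πs)))|
        + |(-Real.log (1-ε))| := abs_add_le _ _
      _ ≤ |Real.log (πs+d) - Real.log (πs-d) - 2*(d/πs)|
        + |Real.log ((1-πs)+d) - Real.log ((1-πs)-d) - 2*(d/(1-πs))|
        + |Real.log (1-ε)| := by rw [abs_neg]; linarith [abs_add_le (Real.log (πs+d) - Real.log (πs-d) - 2*(d/πs)) (Real.log ((1-πs)+d) - Real.log ((1-πs)-d) - 2*(d/(1-πs)))]
      _ ≤ 4*(d/πs)^3 + 4*(d/(1-πs))^3 + 2*ε := by linarith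
      _ ≤ KL*d^3 := by rw [hKLdef]; linarith [q1, q2, q3]
  have hd32 : d^3 ≤ d^2 := by
    calc d^3 = d^2*d := by ring
      _ ≤ d^2*1 := mul_le_mul_of_nonneg_left hd1 (by positivity)
      _ = d^2 := mul_one _
  have hd21 : d^2 ≤ d := by
    calc d^2 = d*d := sq d
      _ ≤ d*1 := mul_le_mul_of_nonneg_left hd1 hd0.le
      _ = d := mul_one d
  have hd3d : d^3 ≤ d := hd32.trans hd21
  have hLub : |L| ≤ (a+KL)*d := by
    have h1 : |L| ≤ |L - a*d| + |a*d| := by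
      calc |L| = |(L - a*d) + a*d| := by ring_nf
        _ ≤ |L - a*d| + |a*d| := abs_add_le _ _
    have h2 : |a*d| = a*d := abs_of_pos (mul_pos ha hd0)
    have h3 : KL*d^3 ≤ KL*d := mul_le_mul_of_nonneg_left hd3d hKL.le
    rw [h2] at h1
    linarith
  set x := L*β with hxdef
  clear_value x
  have hxabs : |x| ≤ 1 := by
    rw [hxdef, abs_mul, ← hBdef]
    rw [le_div_iff₀ (by positivity : (0:ℝ) < B*(a+KL))] at hdBL
    calc |L| *B ≤ ((a+KL)*d)*B := mul_le_mul_of_nonneg_right hLub hB.le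
      _ ≤ 1 := by linarith [hdBL]
  set y := Real.exp x - 1 with hydef
  clear_value y
  have hexp := exp_taylor2 x hxabs
  have hy1 : Real.exp x = y + 1 := by rw [hydef]; ring
  have hxb : |x| ≤ B*((a+KL)*d) := by
    rw [hxdef, abs_mul, ← hBdef]
    calc |L| *B ≤ ((a+KL)*d)*B := mul_le_mul_of_nonneg_right hLub hB.le
      _ = B*((a+KL)*d) := by ring
  have hyK3 : |y - β*a*d - (β*a*d)^2/2| ≤ K3*d^3 := by
    have hid2 : y - β*a*d - (β*a*d)^2/2 = (Real.exp x - (1+x+x^2/2)) + β*(L - a*d)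
        + β^2/2*(L^2 - (a*d)^2) := by
      rw [hydef, hxdef]; ring
    have hb1 : |Real.exp x - (1+x+x^2/2)| ≤ B^3*(a+KL)^3*d^3 := by
      refine hexp.trans ?_
      calc |x|^3 ≤ (B*((a+KL)*d))^3 := pow_le_pow_left₀ (abs_nonneg x) hxb 3
        _ = B^3*(a+KL)^3*d^3 := by ring
    have hb2 : |β*(L - a*d)| ≤ B*KL*d^3 := by
      rw [abs_mul, ← hBdef]
      calc B*|L-a*d| ≤ B*(KL*d^3) := mul_le_mul_of_nonneg_left hLa hB.le
        _ = B*KL*d^3 := by ring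
    have hb3 : |β^2/2*(L^2 - (a*d)^2)| ≤ B^2/2*(KL*(2*a+KL))*d^3 := by
      rw [abs_mul]
      have e : |β^2/2| = B^2/2 := by
        rw [abs_of_nonneg (by positivity : (0:ℝ) ≤ β^2/2), hBdef, sq_abs]
      have h4 : |L + a*d| ≤ (2*a+KL)*d := by
        calc |L+a*d| ≤ |L| + |a*d| := abs_add_le _ _
          _ = |L| + a*d := by rw [abs_of_pos (mul_pos ha hd0)]
          _ ≤ (a+KL)*d + a*d := by linarith
          _ = (2*a+KL)*d := by ring
      have h5 : |L^2 - (a*d)^2| ≤ KL*(2*a+KL)*d^3 := by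
        have hfac : L^2 - (a*d)^2 = (L - a*d)*(L + a*d) := by ring
        rw [hfac, abs_mul]
        calc |L-a*d| *|L+a*d| ≤ (KL*d^3)*((2*a+KL)*d) :=
              mul_le_mul hLa h4 (abs_nonneg _) (by positivity)
          _ = (KL*(2*a+KL)*d^3)*d := by ring
          _ ≤ (KL*(2*a+KL)*d^3)*1 := by
              apply mul_le_mul_of_nonneg_left hd1 (by positivity)
          _ = KL*(2*a+KL)*d^3 := by ring
      rw [e]
      calc B^2/2*|L^2-(a*d)^2| ≤ B^2/2*(KL*(2*a+KL)*d^3) :=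
            mul_le_mul_of_nonneg_left h5 (by positivity)
        _ = B^2/2*(KL*(2*a+KL))*d^3 := by ring
    calc |y - β*a*d - (β*a*d)^2/2|
        = |(Real.exp x - (1+x+x^2/2)) + β*(L - a*d) + β^2/2*(L^2 - (a*d)^2)| := by rw [hid2]
      _ ≤ |(Real.exp x - (1+x+x^2/2)) + β*(L - a*d)| + |β^2/2*(L^2 - (a*d)^2)| := abs_add_le _ _
      _ ≤ |Real.exp x - (1+x+x^2/2)| + |β*(L - a*d)| + |β^2/2*(L^2 - (a*d)^2)| := by
          linarith [abs_add_le (Real.exp x - (1+x+x^2/2)) (β*(L - a*d))]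
      _ ≤ B^3*(a+KL)^3*d^3 + B*KL*d^3 + B^2/2*(KL*(2*a+KL))*d^3 := by linarith
      _ = K3*d^3 := by rw [hK3def]; ring
  have hsqβ : β^2 = B^2 := by rw [hBdef, sq_abs]
  have hy2 : |y - β*a*d| ≤ K4*d^2 := by
    have h1 : |y - β*a*d| ≤ |y - β*a*d - (β*a*d)^2/2| + |(β*a*d)^2/2| := by
      calc |y - β*a*d| = |(y - β*a*d - (β*a*d)^2/2) + (β*a*d)^2/2| := by ring_nf
        _ ≤ _ := abs_add_le _ _
    have h2 : |(β*a*d)^2/2| = B^2*a^2*d^2/2 := by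
      rw [abs_of_nonneg (by positivity : (0:ℝ) ≤ (β*a*d)^2/2)]
      rw [mul_pow, mul_pow, hsqβ]
      try ring
    have h3 : K3*d^3 ≤ K3*d^2 := mul_le_mul_of_nonneg_left hd32 hK3.le
    rw [h2] at h1
    rw [hK4def]
    have hBa2 : (B*a)^2*d^2 = B^2*a^2*d^2 := by ring
    linarith [hBa2]
  have habsβad : |β*a*d| = B*a*d := by
    rw [abs_mul, abs_mul, ← hBdef, abs_of_pos ha, abs_of_pos hd0]
  have hylo : B*a*d/2 ≤ |y| := by
    have h1 : |β*a*d| - |y - β*a*d| ≤ |y| := by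
      have := abs_sub_abs_le_abs_sub (β*a*d) y
      have h2 : |β*a*d - y| = |y - β*a*d| := abs_sub_comm _ _
      linarith
    rw [habsβad] at h1
    rw [le_div_iff₀ (by positivity : (0:ℝ) < 2*K4)] at hdK4
    have h4' := mul_le_mul_of_nonneg_right hdK4 hd0.le
    have h4 : K4*d^2 ≤ B*a*d/2 := by linarith [h4']
    linarith
  have hyne : y ≠ 0 := by
    have : 0 < |y| := lt_of_lt_of_le (by positivity) hylo
    exact abs_pos.mp this
  have hy1pos : 0 < y + 1 := hy1 ▸ Real.exp_pos x
  -- rpow identities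
  have hrp1 : R ε ^ β = y + 1 := by
    rw [Real.rpow_def_of_pos hRpos, ← hLdef, ← hxdef]
    exact hy1
  have hrp2 : R ε ^ (1 - 2*μ/σ^2) = (y+1)⁻¹ := by
    rw [Real.rpow_def_of_pos hRpos, ← hLdef]
    have hrw : L * (1 - 2*μ/σ^2) = -x := by rw [hxdef, hβdef]; ring
    rw [hrw, Real.exp_neg, hy1]
  -- value of ShTu
  have hSval : ShTu ε = A/y + σ^2/2*β*((1-πs)-d) := by
    simp only [hShTu, hπm, hπp]
    rw [hrp1, hrp2]
    have hm : 1 - (μ - lam ε)/k = (1-πs) + d := by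
      rw [hμk, hlamd]
      field_simp
      ring
    have hp : 1 - (μ + lam ε)/k = (1-πs) - d := by
      rw [hμk, hlamd]
      field_simp
      ring
    rw [hm, hp]
    have e1' : y + 1 - 1 = y := by ring
    have e2' : (y+1)⁻¹ - 1 = -y/(y+1) := by field_simp; ring
    rw [e1', e2', hAdef, ht2def]
    field_simp [hyne, hy1pos.ne']
    ring
  -- rewrite the target
  have hQinv : Q^(-(1:ℝ)/3) = c⁻¹ := by
    rw [show (-(1:ℝ)/3) = -((1:ℝ)/3) by norm_num, Real.rpow_neg hQ.le, ← hcdef]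
  have hεinv : ε^(-(1:ℝ)/3) = e3⁻¹ := by
    rw [show (-(1:ℝ)/3) = -((1:ℝ)/3) by norm_num, Real.rpow_neg hεpos.le, ← he3def]
  rw [hQinv, hεinv, hSval]
  have hdecomp : A/y + σ^2/2*β*((1-πs)-d) - σ^2/2*t2^2*πs*c⁻¹*e3⁻¹
      = A*(1/y - 1/(β*a*d) + 1/2) + (A/(β*a))*(1/d - 1/(c*e3)) - σ^2/2*β*d := by
    rw [hAdef, hadef, ht2def]
    field_simp [hyne, hβ, hπs0.ne', h1πsne, hd0.ne', hc.ne', he3.ne']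
    ring
  rw [hdecomp]
  -- bounds on the pieces
  have hW1 : |1/y - 1/(β*a*d) + 1/2| ≤ 2*K5/((B*a)^2)*d := by
    have hβadne : β*a*d ≠ 0 := mul_ne_zero (mul_ne_zero hβ ha.ne') hd0.ne'
    have hNid : 1/y - 1/(β*a*d) + 1/2
        = (-(y - β*a*d - (β*a*d)^2/2) + (β*a*d/2)*(y - β*a*d)) / (y*(β*a*d)) := by
      field_simp [hyne, hβ, ha.ne', hd0.ne']
      ring
    rw [hNid, abs_div]
    rw [div_le_iff₀ (abs_pos.mpr (mul_ne_zero hyne hβadne))]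
    have hNb : |(-(y - β*a*d - (β*a*d)^2/2) + (β*a*d/2)*(y - β*a*d))| ≤ K5*d^3 := by
      have h1 : |(β*a*d/2)*(y - β*a*d)| ≤ (B*a*d/2)*(K4*d^2) := by
        rw [abs_mul]
        have : |β*a*d/2| = B*a*d/2 := by rw [abs_div, habsβad]; simp
        rw [this]
        exact mul_le_mul_of_nonneg_left hy2 (by positivity)
      calc |(-(y - β*a*d - (β*a*d)^2/2) + (β*a*d/2)*(y - β*a*d))|
          ≤ |(-(y - β*a*d - (β*a*d)^2/2))| + |(β*a*d/2)*(y - β*a*d)| := abs_add_le _ _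
        _ = |y - β*a*d - (β*a*d)^2/2| + |(β*a*d/2)*(y - β*a*d)| := by rw [abs_neg]
        _ ≤ K3*d^3 + (B*a*d/2)*(K4*d^2) := by linarith
        _ = K5*d^3 := by rw [hK5def]; ring
    have habs2 : |y*(β*a*d)| = |y| *(B*a*d) := by rw [abs_mul, habsβad]
    have hge : (B*a)^2/2*d^2 ≤ |y| *(B*a*d) := by
      have hh := mul_le_mul_of_nonneg_right hylo (by positivity : (0:ℝ) ≤ B*a*d)
      linarith [hh]
    calc |(-(y - β*a*d - (β*a*d)^2/2) + (β*a*d/2)*(y - β*a*d))| ≤ K5*d^3 := hNb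
      _ = (2*K5/((B*a)^2)*d) * ((B*a)^2/2*d^2) := by field_simp [hB.ne', ha.ne']
      _ ≤ (2*K5/((B*a)^2)*d) * (|y| *(B*a*d)) :=
          mul_le_mul_of_nonneg_left hge (by positivity)
      _ = 2*K5/((B*a)^2)*d * |y*(β*a*d)| := by rw [habs2]
  have hW2 : |1/d - 1/(c*e3)| ≤ 2*K2/c^2*e3 := by
    have hce3 : (0:ℝ) < c*e3 := mul_pos hc he3
    have hW2id : 1/d - 1/(c*e3) = -(d - c*e3)/(d*(c*e3)) := by
      field_simp [hd0.ne', hc.ne', he3.ne']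
      try ring
    rw [hW2id, abs_div, abs_neg]
    rw [div_le_iff₀ (abs_pos.mpr (mul_pos hd0 hce3).ne')]
    calc |d - c*e3| ≤ K2*ε := hdb
      _ = K2*e3^3 := by rw [← he3cube]
      _ = (2*K2/c^2*e3)*(c^2/2*e3^2) := by field_simp [hc.ne']
      _ ≤ (2*K2/c^2*e3)*(d*(c*e3)) := by
          apply mul_le_mul_of_nonneg_left _ (by positivity)
          have := mul_le_mul_of_nonneg_right hdlo (mul_pos hc he3).le
          linarith [this]
      _ = 2*K2/c^2*e3*|d*(c*e3)| := by rw [abs_of_pos (mul_pos hd0 hce3)]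
  -- assemble
  rw [abs_of_pos he3]
  have g3 : |σ^2/2*β*d| = σ^2/2*B*d := by
    rw [abs_mul, abs_mul, ← hBdef, abs_of_pos hd0,
      abs_of_nonneg (by positivity : (0:ℝ) ≤ σ^2/2)]
  have f1 : |A| *|1/y - 1/(β*a*d) + 1/2| ≤ |A| *(2*K5/((B*a)^2))*(3*c/2)*e3 := by
    calc |A| *|1/y - 1/(β*a*d) + 1/2| ≤ |A| *(2*K5/((B*a)^2)*d) :=
          mul_le_mul_of_nonneg_left hW1 (abs_nonneg A)
      _ ≤ |A| *(2*K5/((B*a)^2)*(3*c/2*e3)) := by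
          apply mul_le_mul_of_nonneg_left _ (abs_nonneg A)
          exact mul_le_mul_of_nonneg_left hdhi (by positivity)
      _ = |A| *(2*K5/((B*a)^2))*(3*c/2)*e3 := by ring
  have f2 : |A/(β*a)| *|1/d - 1/(c*e3)| ≤ |A/(β*a)| *(2*K2/c^2)*e3 := by
    calc |A/(β*a)| *|1/d - 1/(c*e3)| ≤ |A/(β*a)| *(2*K2/c^2*e3) :=
          mul_le_mul_of_nonneg_left hW2 (abs_nonneg _)
      _ = |A/(β*a)| *(2*K2/c^2)*e3 := by ring
  have f3 : σ^2/2*B*d ≤ σ^2/2*B*(3*c/2)*e3 := by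
    calc σ^2/2*B*d ≤ σ^2/2*B*(3*c/2*e3) :=
          mul_le_mul_of_nonneg_left hdhi (by positivity)
      _ = σ^2/2*B*(3*c/2)*e3 := by ring
  calc |A*(1/y - 1/(β*a*d) + 1/2) + (A/(β*a))*(1/d - 1/(c*e3)) - σ^2/2*β*d|
      ≤ |A*(1/y - 1/(β*a*d) + 1/2) + (A/(β*a))*(1/d - 1/(c*e3))| + |σ^2/2*β*d| :=
        abs_sub _ _
    _ ≤ |A*(1/y - 1/(β*a*d) + 1/2)| + |(A/(β*a))*(1/d - 1/(c*e3))| + |σ^2/2*β*d| := by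
        linarith [abs_add_le (A*(1/y - 1/(β*a*d) + 1/2)) ((A/(β*a))*(1/d - 1/(c*e3)))]
    _ = |A| *|1/y - 1/(β*a*d) + 1/2| + |A/(β*a)| *|1/d - 1/(c*e3)| + σ^2/2*B*d := by
        rw [abs_mul, abs_mul, g3]
    _ ≤ (|A| * (2*K5/((B*a)^2)) * (3*c/2) + |A/(β*a)| * (2*K2/c^2) + σ^2/2*B*(3*c/2))*e3 := by
        linarith [f1, f2, f3]
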